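/- For every β > 0, ẽ(β) = K₁(β)/K₂(β) + 3/β > 1. -/

import Mathlib

open MeasureTheory Real Set
open Filter

noncomputable def K0 (β : ℝ) : ℝ :=
  ∫ y in Set.Ioi (0:ℝ), (1 / Real.sqrt (1 + y^2)) * Real.exp (-β * Real.sqrt (1 + y^2))

noncomputable def K1 (β : ℝ) : ℝ :=
  ∫ y in Set.Ioi (0:ℝ), Real.exp (-β * Real.sqrt (1 + y^2))

noncomputable def K2 (β : ℝ) : ℝ :=
  ∫ y in Set.Ioi (0:ℝ), ((2*y^2 + 1) / Real.sqrt (1 + y^2)) * Real.exp (-β * Real.sqrt (1 + y^2))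

noncomputable def Mfun (β : ℝ) : ℝ :=
  ∫ q : EuclideanSpace ℝ (Fin 3), Real.exp (-β * Real.sqrt (1 + ‖q‖^2))

section Aux

variable {β : ℝ}

private lemma fpos (y : ℝ) : 0 < Real.sqrt (1 + y^2) := Real.sqrt_pos.2 (by positivity)

private lemma f1 (y : ℝ) : 1 ≤ Real.sqrt (1 + y^2) := by
  nlinarith [Real.sq_sqrt (show (0:ℝ) ≤ 1 + y^2 by positivity), Real.sqrt_nonneg (1 + y^2)]

private lemma fy {y : ℝ} (hy : 0 ≤ y) : y ≤ Real.sqrt (1 + y^2) := by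
  nlinarith [Real.sq_sqrt (show (0:ℝ) ≤ 1 + y^2 by positivity), Real.sqrt_nonneg (1 + y^2)]

private lemma cf : Continuous (fun y : ℝ => Real.sqrt (1 + y^2)) :=
  Real.continuous_sqrt.comp (by continuity)

private lemma cE (β : ℝ) : Continuous (fun y : ℝ => Real.exp (-β * Real.sqrt (1 + y^2))) :=
  (continuous_const.mul cf).rexp

/-- master pointwise bound -/
private lemma bnd (hβ : 0 < β) {y : ℝ} (hy : 0 ≤ y) :
    Real.sqrt (1 + y^2) * Real.exp (-β * Real.sqrt (1 + y^2)) ≤ 2/β * Real.exp (-(β/2) * y) := by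
  set t := Real.sqrt (1 + y^2) with ht
  have htpos := fpos y
  have h1 : t ≤ 2/β * Real.exp (β/2 * t) := by
    have := Real.add_one_le_exp (β/2 * t)
    rw [div_mul_eq_mul_div, le_div_iff₀ hβ]
    nlinarith
  have h2 : Real.exp (-β * t) = Real.exp (-(β/2) * t) * Real.exp (-(β/2) * t) := by
    rw [← Real.exp_add]; ring_nf
  have h3 : Real.exp (-(β/2) * t) ≤ Real.exp (-(β/2) * y) :=
    Real.exp_le_exp.2 (by nlinarith [fy hy])
  have hz : β/2 * t + (-(β/2) * t) = 0 := by ring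
  have h4 : t * Real.exp (-(β/2) * t) ≤ 2/β := by
    calc t * Real.exp (-(β/2) * t)
        ≤ (2/β * Real.exp (β/2 * t)) * Real.exp (-(β/2) * t) :=
          mul_le_mul_of_nonneg_right h1 (Real.exp_pos _).le
      _ = 2/β := by rw [mul_assoc, ← Real.exp_add, hz, Real.exp_zero, mul_one]
  calc t * Real.exp (-β * t) = (t * Real.exp (-(β/2) * t)) * Real.exp (-(β/2) * t) := by
        rw [h2]; ring
    _ ≤ 2/β * Real.exp (-(β/2) * t) :=
        mul_le_mul_of_nonneg_right h4 (Real.exp_pos _).le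
    _ ≤ 2/β * Real.exp (-(β/2) * y) :=
        mul_le_mul_of_nonneg_left h3 (by positivity)

private lemma Iexp (hβ : 0 < β) :
    IntegrableOn (fun y : ℝ => Real.exp (-(β/2) * y)) (Ioi 0) :=
  exp_neg_integrableOn_Ioi 0 (half_pos hβ)

private lemma intK1 (hβ : 0 < β) :
    IntegrableOn (fun y : ℝ => Real.exp (-β * Real.sqrt (1 + y^2))) (Ioi 0) := by
  refine Integrable.mono' ((Iexp hβ).const_mul (2/β)) ((cE β).aestronglyMeasurable) ?_
  filter_upwards [ae_restrict_mem measurableSet_Ioi] with y hy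
  rw [Real.norm_eq_abs, abs_of_pos (Real.exp_pos _)]
  calc Real.exp (-β * Real.sqrt (1 + y^2))
      ≤ Real.sqrt (1 + y^2) * Real.exp (-β * Real.sqrt (1 + y^2)) := by
        nlinarith [f1 y, Real.exp_pos (-β * Real.sqrt (1 + y^2))]
    _ ≤ 2/β * Real.exp (-(β/2) * y) := bnd hβ (le_of_lt hy)

private lemma intK0 (hβ : 0 < β) :
    IntegrableOn (fun y : ℝ => (1 / Real.sqrt (1 + y^2)) * Real.exp (-β * Real.sqrt (1 + y^2)))
      (Ioi 0) := by
  refine Integrable.mono' (intK1 hβ)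
    (((continuous_const.div cf fun y => (fpos y).ne').mul (cE β)).aestronglyMeasurable) ?_
  filter_upwards [] with y
  rw [Real.norm_eq_abs, abs_of_nonneg (by positivity)]
  have h1 : 1 / Real.sqrt (1 + y^2) ≤ 1 := by
    rw [div_le_one (fpos y)]; exact f1 y
  nlinarith [Real.exp_pos (-β * Real.sqrt (1 + y^2))]

private lemma intK2 (hβ : 0 < β) :
    IntegrableOn
      (fun y : ℝ => ((2*y^2 + 1) / Real.sqrt (1 + y^2)) * Real.exp (-β * Real.sqrt (1 + y^2)))
      (Ioi 0) := by
  have cnum : Continuous fun y : ℝ => 2*y^2 + 1 :=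
    (continuous_const.mul (continuous_pow 2)).add continuous_const
  refine Integrable.mono' ((Iexp hβ).const_mul (2 * (2/β)))
    ((cnum.div cf fun y => (fpos y).ne').mul (cE β)).aestronglyMeasurable ?_
  filter_upwards [ae_restrict_mem measurableSet_Ioi] with y hy
  rw [Real.norm_eq_abs, abs_of_nonneg (by positivity)]
  have hsq : Real.sqrt (1 + y^2) ^ 2 = 1 + y^2 := Real.sq_sqrt (by positivity)
  have h1 : (2*y^2 + 1) / Real.sqrt (1 + y^2) ≤ 2 * Real.sqrt (1 + y^2) := by
    rw [div_le_iff₀ (fpos y)]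
    nlinarith
  calc (2*y^2 + 1) / Real.sqrt (1 + y^2) * Real.exp (-β * Real.sqrt (1 + y^2))
      ≤ 2 * Real.sqrt (1 + y^2) * Real.exp (-β * Real.sqrt (1 + y^2)) :=
        mul_le_mul_of_nonneg_right h1 (Real.exp_pos _).le
    _ ≤ 2 * (2/β * Real.exp (-(β/2) * y)) := by
        rw [mul_assoc]
        exact mul_le_mul_of_nonneg_left (bnd hβ hy.le) (by norm_num)
    _ = 2 * (2/β) * Real.exp (-(β/2) * y) := by ring

private lemma intI (hβ : 0 < β) :
    IntegrableOn
      (fun y : ℝ => (y^2 / Real.sqrt (1 + y^2)) * Real.exp (-β * Real.sqrt (1 + y^2)))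
      (Ioi 0) := by
  refine Integrable.mono' ((Iexp hβ).const_mul (2/β))
    ((((continuous_pow 2).div cf fun y => (fpos y).ne').mul
      (cE β)).aestronglyMeasurable) ?_
  filter_upwards [ae_restrict_mem measurableSet_Ioi] with y hy
  rw [Real.norm_eq_abs, abs_of_nonneg (by positivity)]
  have hsq : Real.sqrt (1 + y^2) ^ 2 = 1 + y^2 := Real.sq_sqrt (by positivity)
  have h1 : y^2 / Real.sqrt (1 + y^2) ≤ Real.sqrt (1 + y^2) := by
    rw [div_le_iff₀ (fpos y)]; nlinarith
  calc y^2 / Real.sqrt (1 + y^2) * Real.exp (-β * Real.sqrt (1 + y^2))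
      ≤ Real.sqrt (1 + y^2) * Real.exp (-β * Real.sqrt (1 + y^2)) :=
        mul_le_mul_of_nonneg_right h1 (Real.exp_pos _).le
    _ ≤ 2/β * Real.exp (-(β/2) * y) := bnd hβ hy.le

/-- integration by parts: K1 = β * ∫ y²/√(1+y²) e^{-β√(1+y²)} -/
private lemma parts (hβ : 0 < β) :
    K1 β = β * ∫ y in Ioi (0:ℝ),
      (y^2 / Real.sqrt (1 + y^2)) * Real.exp (-β * Real.sqrt (1 + y^2)) := by
  set g : ℝ → ℝ := fun y => y * Real.exp (-β * Real.sqrt (1 + y^2)) with hg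
  set g' : ℝ → ℝ := fun y => Real.exp (-β * Real.sqrt (1 + y^2)) -
      β * ((y^2 / Real.sqrt (1 + y^2)) * Real.exp (-β * Real.sqrt (1 + y^2))) with hg'
  have hderiv : ∀ y ∈ Ici (0:ℝ), HasDerivAt g (g' y) y := by
    intro y _
    have hinner : HasDerivAt (fun y : ℝ => 1 + y^2) (2*y) y := by
      simpa using ((hasDerivAt_pow 2 y).const_add 1)
    have hroot : HasDerivAt (fun y : ℝ => Real.sqrt (1 + y^2))
        (1 / (2 * Real.sqrt (1 + y^2)) * (2*y)) y :=
      (Real.hasDerivAt_sqrt (by positivity)).comp y hinner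
    have hE : HasDerivAt (fun y : ℝ => Real.exp (-β * Real.sqrt (1 + y^2)))
        (Real.exp (-β * Real.sqrt (1 + y^2)) * (-β * (1 / (2 * Real.sqrt (1 + y^2)) * (2*y)))) y :=
      (hroot.const_mul (-β)).exp
    have := ((hasDerivAt_id' y).mul hE : HasDerivAt g _ y)
    refine this.congr_deriv ?_
    have h0 := (fpos y).ne'
    simp only [hg']
    field_simp [hg', hg]
    ring
  have hgint : IntegrableOn g' (Ioi 0) :=
    (intK1 hβ).sub ((intI hβ).const_mul β)
  have htend : Tendsto g atTop (nhds 0) := by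
    apply squeeze_zero' (g := fun y => 2/β * Real.exp (-(β/2) * y))
    · filter_upwards [eventually_ge_atTop (0:ℝ)] with y hy
      exact mul_nonneg hy (Real.exp_pos _).le
    · filter_upwards [eventually_ge_atTop (0:ℝ)] with y hy
      calc y * Real.exp (-β * Real.sqrt (1 + y^2))
          ≤ Real.sqrt (1 + y^2) * Real.exp (-β * Real.sqrt (1 + y^2)) :=
            mul_le_mul_of_nonneg_right (fy hy) (Real.exp_pos _).le
        _ ≤ 2/β * Real.exp (-(β/2) * y) := bnd hβ hy
    · have h1 : Tendsto (fun y : ℝ => -(β/2) * y) atTop atBot :=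
        Tendsto.const_mul_atTop_of_neg (by linarith) tendsto_id
      have h2 : Tendsto (fun y : ℝ => Real.exp (-(β/2) * y)) atTop (nhds 0) :=
        Real.tendsto_exp_atBot.comp h1
      simpa using h2.const_mul (2/β)
  have hzero : ∫ y in Ioi (0:ℝ), g' y = 0 := by
    rw [integral_Ioi_of_hasDerivAt_of_tendsto' hderiv hgint htend]
    simp [hg]
  have hsub := integral_sub (intK1 hβ) ((intI hβ).const_mul β)
  rw [show (fun y : ℝ => Real.exp (-β * Real.sqrt (1 + y^2)) -
      β * ((y^2 / Real.sqrt (1 + y^2)) * Real.exp (-β * Real.sqrt (1 + y^2)))) = g' from rfl,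
    hzero] at hsub
  have hc : ∫ y in Ioi (0:ℝ), β * ((y^2 / Real.sqrt (1 + y^2)) *
      Real.exp (-β * Real.sqrt (1 + y^2))) = β * ∫ y in Ioi (0:ℝ),
      (y^2 / Real.sqrt (1 + y^2)) * Real.exp (-β * Real.sqrt (1 + y^2)) :=
    integral_const_mul β _
  rw [hc] at hsub
  rw [K1]
  linarith [hsub]

private lemma recurrence (hβ : 0 < β) : K2 β = K0 β + 2/β * K1 β := by
  have hI := parts hβ
  have hsplit : K2 β = 2 * (∫ y in Ioi (0:ℝ),
      (y^2 / Real.sqrt (1 + y^2)) * Real.exp (-β * Real.sqrt (1 + y^2))) + K0 β := by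
    rw [K2, K0, ← integral_const_mul, ← integral_add ((intI hβ).const_mul 2) (intK0 hβ)]
    apply setIntegral_congr_fun measurableSet_Ioi
    intro y _
    have h0 := (fpos y).ne'
    field_simp
  rw [hsplit]
  field_simp at hI ⊢
  linarith [hI]

private lemma K1pos (hβ : 0 < β) : 0 < K1 β := by
  rw [K1]
  rw [setIntegral_pos_iff_support_of_nonneg_ae ?_ (intK1 hβ)]
  · have : (Function.support fun y : ℝ => Real.exp (-β * Real.sqrt (1 + y^2))) = univ := by
      ext y; simp [Function.support, (Real.exp_pos _).ne']
    rw [this, univ_inter]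
    simp [Real.volume_Ioi]
  · filter_upwards [] with y
    exact (Real.exp_pos _).le

private lemma K2pos (hβ : 0 < β) : 0 < K2 β := by
  rw [K2]
  rw [setIntegral_pos_iff_support_of_nonneg_ae ?_ (intK2 hβ)]
  · have : (Function.support fun y : ℝ =>
        ((2*y^2 + 1) / Real.sqrt (1 + y^2)) * Real.exp (-β * Real.sqrt (1 + y^2))) = univ := by
      ext y
      have h1 : (0:ℝ) < (2*y^2 + 1) / Real.sqrt (1 + y^2) := by positivity
      simp only [Function.support, mem_setOf_eq, mem_univ, iff_true]
      exact (mul_pos h1 (Real.exp_pos _)).ne'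
    rw [this, univ_inter]
    simp [Real.volume_Ioi]
  · filter_upwards [] with y
    positivity

private lemma K0nonneg (hβ : 0 < β) : 0 ≤ K0 β := by
  rw [K0]
  apply setIntegral_nonneg measurableSet_Ioi
  intro y _
  positivity

private lemma K0leK1 (hβ : 0 < β) : K0 β ≤ K1 β := by
  rw [K0, K1]
  apply setIntegral_mono_on (intK0 hβ) (intK1 hβ) measurableSet_Ioi
  intro y _
  have h1 : 1 / Real.sqrt (1 + y^2) ≤ 1 := by
    rw [div_le_one (fpos y)]; exact f1 y
  nlinarith [Real.exp_pos (-β * Real.sqrt (1 + y^2))]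

end Aux

theorem etilde_gt_one (β : ℝ) (hβ : 0 < β) :
    K1 β / K2 β + 3 / β > 1 := by
  have hrec := recurrence hβ
  have h1 := K1pos hβ
  have h2 := K2pos hβ
  have h0 := K0nonneg hβ
  have h01 := K0leK1 hβ
  have key : β * (β - 3) * K0 β < (β^2 - 2*β + 6) * K1 β := by
    rcases le_or_gt β 3 with h | h
    · have hL : β * (β - 3) * K0 β ≤ 0 :=
        mul_nonpos_of_nonpos_of_nonneg (by nlinarith) h0
      have hR : 0 < (β^2 - 2*β + 6) * K1 β := mul_pos (by nlinarith) h1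
      linarith
    · have hL : β * (β - 3) * K0 β ≤ β * (β - 3) * K1 β :=
        mul_le_mul_of_nonneg_left h01 (by nlinarith)
      nlinarith
  have key2 : (β - 3) * K2 β < K1 β * β := by
    rw [← mul_lt_mul_iff_right₀ hβ, hrec]
    have hexp : β * ((β - 3) * (K0 β + 2/β * K1 β)) =
        β * (β - 3) * K0 β + (2*β - 6) * K1 β := by
      field_simp
      ring
    rw [hexp]
    nlinarith
  have h3 : 1 - 3/β < K1 β / K2 β := by
    have heq : 1 - 3/β = (β - 3)/β := by field_simp
    rw [heq, div_lt_div_iff₀ hβ h2]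
    exact key2
  linarith
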